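/- arXiv:0909.3628 — 6 statements merged into one kernel-verified Lean document; each statement's English description precedes it below -/
import Mathlib

section
/- Let E be a real normed vector space, let Ω ⊆ E be open and path-connected, let F : Ω → E, and let C ≥ 0. Then the following are equivalent: (i) for all x, y ∈ Ω and every continuous path γ : [0,1] → Ω with γ(0) = x, γ(1) = y and finite length, one has ‖F(y) − F(x)‖ ≤ C · (length of γ); (ii) F is locally Lipschitz with common constant C, i.e., every point of Ω has an open ball neighborhood contained in Ω on which F is Lipschitz with constant C. (In other words, the scheme operator F satisfies the intrinsic-metric stability bound ‖F(x*) − F(x)‖ ≤ C·Λ_Ω(x, x*) if and only if F is locally Lipschitz for the common constant C.) -/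
/-- The scheme operator `F` satisfies the intrinsic-metric stability bound
`‖F x* − F x‖ ≤ C · Λ_Ω(x, x*)` (equivalently, the bound against the length of every
finite-length continuous path in `Ω` joining `x` and `x*`) if and only if `F` is locally
Lipschitz on the open path-connected set `Ω` for the common constant `C`. -/
theorem stmt_0
    {E : Type*} [NormedAddCommGroup E] [NormedSpace ℝ E]
    (Ω : Set E) (hΩopen : IsOpen Ω) (hΩconn : IsPathConnected Ω)
    (F : E → E) (C : ℝ) (hC : 0 ≤ C) :
    (∀ x ∈ Ω, ∀ y ∈ Ω, ∀ γ : ℝ → E,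
        ContinuousOn γ (Set.Icc 0 1) →
        (∀ t ∈ Set.Icc (0 : ℝ) 1, γ t ∈ Ω) →
        γ 0 = x → γ 1 = y →
        eVariationOn γ (Set.Icc 0 1) < ⊤ →
        ‖F y - F x‖ ≤ C * (eVariationOn γ (Set.Icc 0 1)).toReal)
    ↔
    (∀ x ∈ Ω, ∃ r > (0 : ℝ), Metric.ball x r ⊆ Ω ∧
        LipschitzOnWith C.toNNReal F (Metric.ball x r)) := by
  have hCcoe : ((C.toNNReal : NNReal) : ℝ) = C := Real.coe_toNNReal C hC
  constructor
  · intro H x hx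
    obtain ⟨r, hr, hball⟩ := Metric.isOpen_iff.1 hΩopen x hx
    refine ⟨r, hr, hball, LipschitzOnWith.of_dist_le_mul ?_⟩
    intro z hz y hy
    set γ : ℝ → E := fun t => y + t • (z - y) with hγ
    have hseg : ∀ t ∈ Set.Icc (0:ℝ) 1, γ t ∈ Metric.ball x r := by
      intro t ht
      have heq : γ t = (1 - t) • y + t • z := by
        simp only [hγ]; module
      rw [heq]
      exact (convex_ball x r) hy hz (by linarith [ht.2]) ht.1 (by ring)
    have hlip : LipschitzWith ‖z - y‖₊ γ := by
      apply LipschitzWith.of_dist_le_mul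
      intro s t
      simp only [hγ, dist_eq_norm, add_sub_add_left_eq_sub, ← sub_smul, norm_smul,
        Real.norm_eq_abs, coe_nnnorm]
      exact le_of_eq (mul_comm _ _)
    have hvar : eVariationOn γ (Set.Icc 0 1) ≤ (‖z - y‖₊ : ENNReal) := by
      have h1 : eVariationOn (id : ℝ → ℝ) (Set.Icc (0:ℝ) 1) ≤ ENNReal.ofReal 1 := by
        have := (monotoneOn_id (s := Set.Icc (0:ℝ) 1)).eVariationOn_le
          (a := 0) (b := 1) (by simp) (by simp)
        simpa [Set.inter_self] using this
      calc eVariationOn γ (Set.Icc 0 1) = eVariationOn (γ ∘ id) (Set.Icc 0 1) := rfl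
        _ ≤ ‖z - y‖₊ * eVariationOn (id : ℝ → ℝ) (Set.Icc 0 1) :=
            LipschitzOnWith.comp_eVariationOn_le (hlip.lipschitzOnWith (s := Set.univ)) (Set.mapsTo_univ _ _)
        _ ≤ ‖z - y‖₊ * ENNReal.ofReal 1 := by gcongr
        _ = (‖z - y‖₊ : ENNReal) := by simp
    have h0 : γ 0 = y := by simp [hγ]
    have h1 : γ 1 = z := by simp [hγ]
    have hbound := H y (hball hy) z (hball hz) γ
      (by fun_prop) (fun t ht => hball (hseg t ht)) h0 h1
      (lt_of_le_of_lt hvar ENNReal.coe_lt_top)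
    rw [dist_eq_norm, hCcoe, dist_eq_norm]
    refine hbound.trans ?_
    gcongr
    have : (eVariationOn γ (Set.Icc 0 1)).toReal ≤ ((‖z - y‖₊ : ENNReal)).toReal :=
      ENNReal.toReal_mono ENNReal.coe_ne_top hvar
    simpa using this
  · intro H x hx y hy γ hγcont hγΩ hγ0 hγ1 hvar
    -- local cover data
    have key : ∀ t : Set.Icc (0:ℝ) 1, ∃ V : Set ℝ, IsOpen V ∧ (t:ℝ) ∈ V ∧
        ∃ B : Set E, LipschitzOnWith C.toNNReal F B ∧
          ∀ s ∈ V ∩ Set.Icc (0:ℝ) 1, γ s ∈ B := by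
      rintro ⟨t, ht⟩
      obtain ⟨r, hr, hsub, hlip⟩ := H (γ t) (hγΩ t ht)
      have hc : γ ⁻¹' Metric.ball (γ t) r ∈ nhdsWithin t (Set.Icc (0:ℝ) 1) :=
        hγcont t ht (Metric.ball_mem_nhds _ hr)
      obtain ⟨V, hVopen, htV, hV⟩ := mem_nhdsWithin.1 hc
      exact ⟨V, hVopen, htV, Metric.ball (γ t) r, hlip, fun s hs => hV ⟨hs.1, hs.2⟩⟩
    choose V hVopen htV B hBlip hVB using key
    obtain ⟨δ, hδ, hδball⟩ := lebesgue_number_lemma_of_metric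
      (isCompact_Icc : IsCompact (Set.Icc (0:ℝ) 1)) hVopen
      (fun t ht => Set.mem_iUnion.2 ⟨⟨t, ht⟩, htV _⟩)
    obtain ⟨n, hn⟩ := exists_nat_gt (1 / δ)
    have hn0 : 0 < (n : ℝ) := lt_trans (by positivity) hn
    set u : ℕ → ℝ := fun i => min ((i : ℝ) / n) 1 with hu
    have humono : Monotone u := by
      intro i j hij
      exact min_le_min (by gcongr) le_rfl
    have huIcc : ∀ i, u i ∈ Set.Icc (0:ℝ) 1 := by
      intro i; constructor
      · exact le_min (by positivity) zero_le_one
      · exact min_le_right _ _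
    have hu0 : u 0 = 0 := by simp [hu]
    have hun : u n = 1 := by simp [hu, div_self hn0.ne']
    have hclose : ∀ i, dist (u (i+1)) (u i) < δ := by
      intro i
      rw [Real.dist_eq, abs_of_nonneg (sub_nonneg.2 (humono (Nat.le_succ i)))]
      have h1 : u (i+1) - u i ≤ ((i:ℝ)+1)/n - (i:ℝ)/n ∨ u (i+1) - u i ≤ 0 := by
        rcases le_total ((i:ℝ)/n) 1 with h | h
        · left
          have hui : u i = (i:ℝ)/n := min_eq_left h
          have h2 : u (i+1) ≤ ((i:ℝ)+1)/n := by
            refine (min_le_left _ _).trans (le_of_eq ?_)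
            push_cast; ring
          rw [hui]; linarith
        · right
          have hi : u i = 1 := min_eq_right h
          have : u (i+1) ≤ 1 := min_le_right _ _
          linarith
      have hstep : ((i:ℝ)+1)/n - (i:ℝ)/n = 1/n := by field_simp; ring
      rcases h1 with h | h
      · rw [hstep] at h
        refine lt_of_le_of_lt h ?_
        rw [div_lt_iff₀ hn0, ← div_lt_iff₀' hδ]  -- 1/n < δ ↔ 1 < δ * n... check
        exact hn
      · linarith
    -- per-step Lipschitz estimate
    have hstep : ∀ i, dist (F (γ (u (i+1)))) (F (γ (u i))) ≤ C * dist (γ (u (i+1))) (γ (u i)) := by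
      intro i
      obtain ⟨t, hball⟩ := hδball (u i) (huIcc i)
      have h1 : u i ∈ V t ∩ Set.Icc 0 1 :=
        ⟨hball (Metric.mem_ball_self hδ), huIcc i⟩
      have h2 : u (i+1) ∈ V t ∩ Set.Icc 0 1 :=
        ⟨hball (by simpa [Metric.mem_ball] using hclose i), huIcc (i+1)⟩
      have := (hBlip t).dist_le_mul _ (hVB t _ h2) _ (hVB t _ h1)
      rwa [hCcoe] at this
    have htele : dist (F (γ (u 0))) (F (γ (u n))) ≤
        ∑ i ∈ Finset.range n, dist (F (γ (u i))) (F (γ (u (i+1)))) :=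
      dist_le_range_sum_dist (fun i => F (γ (u i))) n
    have hsum : ∑ i ∈ Finset.range n, dist (γ (u i)) (γ (u (i+1))) ≤
        (eVariationOn γ (Set.Icc 0 1)).toReal := by
      have hle : ∑ i ∈ Finset.range n, edist (γ (u (i+1))) (γ (u i)) ≤
          eVariationOn γ (Set.Icc 0 1) := eVariationOn.sum_le (f := γ) (n := n) humono huIcc
      have := ENNReal.toReal_mono hvar.ne hle
      rw [ENNReal.toReal_sum (fun i _ => edist_ne_top _ _)] at this
      refine le_trans (le_of_eq ?_) this
      exact Finset.sum_congr rfl fun i _ => by rw [dist_edist, edist_comm]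
    calc ‖F y - F x‖ = dist (F (γ (u 0))) (F (γ (u n))) := by
          rw [hu0, hun, hγ0, hγ1, dist_eq_norm, norm_sub_rev]
      _ ≤ ∑ i ∈ Finset.range n, dist (F (γ (u i))) (F (γ (u (i+1)))) := htele
      _ ≤ ∑ i ∈ Finset.range n, C * dist (γ (u i)) (γ (u (i+1))) := by
          refine Finset.sum_le_sum fun i _ => ?_
          rw [dist_comm, dist_comm (γ (u i))]
          exact hstep i
      _ = C * ∑ i ∈ Finset.range n, dist (γ (u i)) (γ (u (i+1))) := by rw [Finset.mul_sum]
      _ ≤ C * (eVariationOn γ (Set.Icc 0 1)).toReal := by gcongr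
end

section
/- Let E be a real normed vector space, let Ω ⊆ E be open, and let F : Ω → E be such that every point of Ω has an open ball neighborhood contained in Ω on which F is Lipschitz with constant C ≥ 0. Then for every continuous path γ : [0,1] → Ω of finite length, ‖F(γ(1)) − F(γ(0))‖ ≤ C · (length of γ), where the length of γ is its total variation over [0,1]. -/
/-- The chaining estimate: if every point of the open set `Ω` has an open ball neighborhood
contained in `Ω` on which `F` is Lipschitz with constant `C`, then for every continuous
finite-length path `γ` in `Ω`, `‖F (γ 1) − F (γ 0)‖ ≤ C · length γ`. -/
theorem stmt_1
    {E : Type*} [NormedAddCommGroup E] [NormedSpace ℝ E]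
    (Ω : Set E) (hΩopen : IsOpen Ω)
    (F : E → E) (C : ℝ) (hC : 0 ≤ C)
    (hLoc : ∀ x ∈ Ω, ∃ r > (0 : ℝ), Metric.ball x r ⊆ Ω ∧
        LipschitzOnWith C.toNNReal F (Metric.ball x r))
    (γ : ℝ → E)
    (hγcont : ContinuousOn γ (Set.Icc 0 1))
    (hγmem : ∀ t ∈ Set.Icc (0 : ℝ) 1, γ t ∈ Ω)
    (hγfin : eVariationOn γ (Set.Icc 0 1) < ⊤) :
    ‖F (γ 1) - F (γ 0)‖ ≤ C * (eVariationOn γ (Set.Icc 0 1)).toReal := by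
  classical
  choose! r hrpos hrΩ hrlip using hLoc
  -- the image of the path is compact and covered by the Lipschitz balls
  set K : Set E := γ '' Set.Icc 0 1 with hK
  have hKcomp : IsCompact K := isCompact_Icc.image_of_continuousOn hγcont
  have hKcover : K ⊆ ⋃ y : Ω, Metric.ball (y : E) (r y) := by
    rintro x ⟨t, ht, rfl⟩
    exact Set.mem_iUnion.2 ⟨⟨γ t, hγmem t ht⟩, Metric.mem_ball_self (hrpos _ (hγmem t ht))⟩
  obtain ⟨δ, hδpos, hδ⟩ := lebesgue_number_lemma_of_metric hKcomp
    (fun y : Ω => Metric.isOpen_ball) hKcover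
  -- uniform continuity of γ gives η
  obtain ⟨η, hηpos, hη⟩ := (Metric.uniformContinuousOn_iff.1
    (isCompact_Icc.uniformContinuousOn_of_continuous hγcont)) δ hδpos
  -- choose n with 1/n < η
  obtain ⟨n, hn⟩ := exists_nat_one_div_lt hηpos
  have hn1 : (0 : ℝ) < (n : ℝ) + 1 := by positivity
  -- the partition
  set u : ℕ → ℝ := fun i => min ((i : ℝ) / ((n : ℝ) + 1)) 1 with hu
  have humono : Monotone u := fun i j hij => by
    have h : (i : ℝ) ≤ (j : ℝ) := Nat.cast_le.2 hij
    exact min_le_min (by gcongr) le_rfl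
  have humem : ∀ i, u i ∈ Set.Icc (0 : ℝ) 1 :=
    fun i => ⟨le_min (by positivity) zero_le_one, min_le_right _ _⟩
  have hu0 : u 0 = 0 := by simp [hu]
  have huN : u (n + 1) = 1 := by
    have : ((n : ℝ) + 1) / ((n : ℝ) + 1) = 1 := div_self hn1.ne'
    simp [hu, this]
  have hustep : ∀ i, dist (u (i + 1)) (u i) < η := by
    intro i
    rw [Real.dist_eq, abs_sub_lt_iff]
    constructor
    · have hc : (0 : ℝ) ≤ 1 / ((n : ℝ) + 1) := by positivity
      have h1 : u (i + 1) ≤ u i + 1 / ((n : ℝ) + 1) := by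
        calc u (i + 1) = min ((i : ℝ) / ((n : ℝ) + 1) + 1 / ((n : ℝ) + 1)) 1 := by
              simp only [hu]; congr 1; push_cast; ring
          _ ≤ min ((i : ℝ) / ((n : ℝ) + 1) + 1 / ((n : ℝ) + 1)) (1 + 1 / ((n : ℝ) + 1)) :=
              min_le_min le_rfl (by linarith)
          _ = min ((i : ℝ) / ((n : ℝ) + 1)) 1 + 1 / ((n : ℝ) + 1) :=
              min_add_add_right _ _ _
          _ = u i + 1 / ((n : ℝ) + 1) := rfl
      linarith [h1, hn]
    · have := humono (Nat.le_succ i)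
      linarith [hn, one_div_pos.2 hηpos]
  -- each consecutive pair lies in a common Lipschitz ball
  have hstep : ∀ i, dist (F (γ (u i))) (F (γ (u (i + 1)))) ≤ C * dist (γ (u i)) (γ (u (i + 1)))
      := by
    intro i
    have hxK : γ (u i) ∈ K := ⟨u i, humem i, rfl⟩
    obtain ⟨y, hy⟩ := hδ _ hxK
    have h1 : γ (u i) ∈ Metric.ball (y : E) (r y) := hy (Metric.mem_ball_self hδpos)
    have h2 : γ (u (i + 1)) ∈ Metric.ball (y : E) (r y) := by
      apply hy
      rw [Metric.mem_ball, dist_comm]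
      exact hη _ (humem i) _ (humem (i + 1)) (by rw [dist_comm]; exact hustep i)
    have := (hrlip _ y.2).dist_le_mul _ h1 _ h2
    rwa [Real.coe_toNNReal _ hC] at this
  -- telescoping estimate
  have htel : dist (F (γ (u 0))) (F (γ (u (n + 1)))) ≤
      C * ∑ i ∈ Finset.range (n + 1), dist (γ (u i)) (γ (u (i + 1))) := by
    calc dist (F (γ (u 0))) (F (γ (u (n + 1))))
        ≤ ∑ i ∈ Finset.range (n + 1), dist (F (γ (u i))) (F (γ (u (i + 1)))) :=
          dist_le_range_sum_dist (fun i => F (γ (u i))) (n + 1)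
      _ ≤ ∑ i ∈ Finset.range (n + 1), C * dist (γ (u i)) (γ (u (i + 1))) :=
          Finset.sum_le_sum fun i _ => hstep i
      _ = C * ∑ i ∈ Finset.range (n + 1), dist (γ (u i)) (γ (u (i + 1))) := by
          rw [Finset.mul_sum]
  -- the sum of distances is at most the total variation
  have hsum : ∑ i ∈ Finset.range (n + 1), dist (γ (u i)) (γ (u (i + 1))) ≤
      (eVariationOn γ (Set.Icc 0 1)).toReal := by
    have hle : ∑ i ∈ Finset.range (n + 1), edist (γ (u (i + 1))) (γ (u i)) ≤
        eVariationOn γ (Set.Icc 0 1) :=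
      eVariationOn.sum_le (f := γ) (n := n + 1) humono (fun i => humem i)
    have := ENNReal.toReal_mono hγfin.ne hle
    rw [ENNReal.toReal_sum (fun i _ => edist_ne_top _ _)] at this
    rw [Finset.sum_congr rfl fun i _ => by
      rw [edist_dist, ENNReal.toReal_ofReal dist_nonneg, dist_comm]] at this
    exact this
  have := htel.trans (mul_le_mul_of_nonneg_left hsum hC)
  rw [hu0, huN, dist_comm] at this
  rwa [dist_eq_norm] at this
end

section
/- Let E be a real normed vector space, let Ω ⊆ E be open and path-connected, let F : Ω → E be differentiable on Ω (Fréchet differentiable at every point of Ω), and let C ≥ 0. Then the derivative bound ‖fderiv F x‖ ≤ C for all x ∈ Ω holds if and only if for all x, y ∈ Ω and every continuous path γ : [0,1] → Ω with γ(0) = x, γ(1) = y and finite length, ‖F(y) − F(x)‖ ≤ C · (length of γ). (That is, the nonlinear scheme F is stable, in the sense of the Lipschitz bound with respect to the intrinsic metric of Ω, if and only if its scheme in variations δF = F′·δx is stable, i.e., the operator norms ‖F′(x)‖ are uniformly bounded by C on Ω.) -/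
open Set Metric

/-- A nonlinear scheme `F`, differentiable on the open path-connected set `Ω`, is stable
(in the sense of the Lipschitz bound with respect to the intrinsic metric of `Ω`, i.e.
against lengths of finite-length continuous paths in `Ω`) if and only if its scheme in
variations is stable, i.e. `‖F′(x)‖ ≤ C` uniformly on `Ω`. -/
theorem stmt_2
    {E : Type*} [NormedAddCommGroup E] [NormedSpace ℝ E]
    (Ω : Set E) (hΩopen : IsOpen Ω) (hΩconn : IsPathConnected Ω)
    (F : E → E) (hF : ∀ x ∈ Ω, DifferentiableAt ℝ F x)
    (C : ℝ) (hC : 0 ≤ C) :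
    (∀ x ∈ Ω, ‖fderiv ℝ F x‖ ≤ C)
    ↔
    (∀ x ∈ Ω, ∀ y ∈ Ω, ∀ γ : ℝ → E,
        ContinuousOn γ (Set.Icc 0 1) →
        (∀ t ∈ Set.Icc (0 : ℝ) 1, γ t ∈ Ω) →
        γ 0 = x → γ 1 = y →
        eVariationOn γ (Set.Icc 0 1) < ⊤ →
        ‖F y - F x‖ ≤ C * (eVariationOn γ (Set.Icc 0 1)).toReal) := by
  constructor
  · intro hbound x hx y hy γ hγc hγΩ hγ0 hγ1 hvar
    -- the image of the path is compact and contained in Ω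
    have hK : IsCompact (γ '' Icc 0 1) := (isCompact_Icc).image_of_continuousOn hγc
    have hKΩ : γ '' Icc 0 1 ⊆ Ω := by
      rintro _ ⟨t, ht, rfl⟩; exact hγΩ t ht
    obtain ⟨r, hr, hrΩ⟩ := hK.exists_thickening_subset_open hΩopen hKΩ
    -- uniform continuity: choose δ
    have huc := (isCompact_Icc : IsCompact (Icc (0:ℝ) 1)).uniformContinuousOn_of_continuous hγc
    rw [Metric.uniformContinuousOn_iff] at huc
    obtain ⟨δ, hδ, hδr⟩ := huc r hr
    -- choose n with 1/n < δ
    obtain ⟨n, hn⟩ := exists_nat_one_div_lt hδ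
    set N := n + 1 with hN
    have hN1 : (1:ℝ)/N < δ := by rw [hN]; push_cast; exact hn
    have hNpos : (0:ℝ) < N := by positivity
    -- the partition
    set u : ℕ → ℝ := fun i => min ((i : ℝ) / N) 1 with hu
    have humono : Monotone u := by
      intro a b hab
      exact min_le_min ((div_le_div_iff_of_pos_right hNpos).mpr (by exact_mod_cast hab)) le_rfl
    have humem : ∀ i, u i ∈ Icc (0:ℝ) 1 := by
      intro i
      constructor
      · exact le_min (by positivity) zero_le_one
      · exact min_le_right _ _
    have hu0 : u 0 = 0 := by simp [hu]
    have huN : u N = 1 := by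
      simp only [hu]
      rw [div_self (ne_of_gt hNpos)]
      simp
    have key : ∀ a b : ℝ, b ≤ a → min a 1 - min b 1 ≤ a - b := by
      intro a b hba
      rcases le_total b 1 with h1 | h1
      · rw [min_eq_left h1]; linarith [min_le_left a 1]
      · rw [min_eq_right h1]; linarith [min_le_right a 1]
    have hustep : ∀ i, u (i+1) - u i ≤ 1 / N := by
      intro i
      have hle : (i:ℝ)/N ≤ ((i:ℝ)+1)/N := by gcongr; linarith
      have h := key (((i:ℝ)+1)/N) ((i:ℝ)/N) hle
      have heq : u (i+1) - u i = min (((i:ℝ)+1)/N) 1 - min ((i:ℝ)/N) 1 := by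
        simp only [hu]; push_cast; ring_nf
      have hdiff : ((i:ℝ)+1)/N - (i:ℝ)/N = 1/N := by ring
      rw [heq]; linarith
    -- local Lipschitz estimate on each step
    have hstep : ∀ i, ‖F (γ (u (i+1))) - F (γ (u i))‖ ≤ C * ‖γ (u (i+1)) - γ (u i)‖ := by
      intro i
      have hball : ball (γ (u i)) r ⊆ Ω := by
        refine Subset.trans ?_ hrΩ
        exact ball_subset_thickening (mem_image_of_mem γ (humem i)) r
      have hdist : dist (γ (u (i+1))) (γ (u i)) < r := by
        apply hδr _ (humem (i+1)) _ (humem i)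
        rw [Real.dist_eq, abs_of_nonneg (sub_nonneg.mpr (humono (Nat.le_succ i)))]
        calc u (i+1) - u i ≤ 1/N := hustep i
          _ < δ := hN1
      exact (convex_ball _ _).norm_image_sub_le_of_norm_fderiv_le
        (fun z hz => hF z (hball hz)) (fun z hz => hbound z (hball hz))
        (mem_ball_self hr) hdist
    -- sum up
    have htel : F y - F x = ∑ i ∈ Finset.range N, (F (γ (u (i+1))) - F (γ (u i))) := by
      rw [Finset.sum_range_sub (fun i => F (γ (u i))), hu0, huN, hγ0, hγ1]
    have hsum : ∑ i ∈ Finset.range N, ‖γ (u (i+1)) - γ (u i)‖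
        ≤ (eVariationOn γ (Icc 0 1)).toReal := by
      have h1 : ∑ i ∈ Finset.range N, edist (γ (u (i+1))) (γ (u i))
          ≤ eVariationOn γ (Icc 0 1) := eVariationOn.sum_le (f := γ) (n := N) humono humem
      have h2 : (∑ i ∈ Finset.range N, edist (γ (u (i+1))) (γ (u i))).toReal
          = ∑ i ∈ Finset.range N, ‖γ (u (i+1)) - γ (u i)‖ := by
        rw [ENNReal.toReal_sum (fun i _ => edist_ne_top _ _)]
        congr 1; ext i
        rw [edist_dist, ENNReal.toReal_ofReal dist_nonneg, dist_eq_norm]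
      rw [← h2]
      exact ENNReal.toReal_mono hvar.ne h1
    calc ‖F y - F x‖ = ‖∑ i ∈ Finset.range N, (F (γ (u (i+1))) - F (γ (u i)))‖ := by rw [htel]
      _ ≤ ∑ i ∈ Finset.range N, ‖F (γ (u (i+1))) - F (γ (u i))‖ := norm_sum_le _ _
      _ ≤ ∑ i ∈ Finset.range N, C * ‖γ (u (i+1)) - γ (u i)‖ :=
          Finset.sum_le_sum (fun i _ => hstep i)
      _ = C * ∑ i ∈ Finset.range N, ‖γ (u (i+1)) - γ (u i)‖ := by rw [Finset.mul_sum]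
      _ ≤ C * (eVariationOn γ (Icc 0 1)).toReal := by
          exact mul_le_mul_of_nonneg_left hsum hC
  · intro hpath x hx
    obtain ⟨ε, hε, hball⟩ := Metric.isOpen_iff.mp hΩopen x hx
    have hlip : LipschitzOnWith (show NNReal from ⟨C, hC⟩) F (ball x ε) := by
      rw [lipschitzOnWith_iff_norm_sub_le]
      intro z hz y hy
      set γ : ℝ → E := fun t => y + t • (z - y) with hγ
      have hγc : ContinuousOn γ (Icc 0 1) :=
        (continuous_const.add (continuous_id.smul continuous_const)).continuousOn
      have hγmem : ∀ t ∈ Icc (0:ℝ) 1, γ t ∈ Ω := by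
        intro t ht
        apply hball
        have : γ t = (1 - t) • y + t • z := by
          simp only [hγ]; module
        rw [this]
        exact (convex_ball x ε) hy hz (by linarith [ht.1, ht.2]) ht.1 (by linarith [ht.2])
      have hγ0 : γ 0 = y := by simp [hγ]
      have hγ1 : γ 1 = z := by simp [hγ]
      have hlipγ : LipschitzOnWith ‖z - y‖₊ γ Set.univ := by
        apply LipschitzWith.lipschitzOnWith
        apply LipschitzWith.of_dist_le_mul
        intro a b
        simp only [hγ, dist_eq_norm]
        have : y + a • (z - y) - (y + b • (z - y)) = (a - b) • (z - y) := by module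
        rw [this, norm_smul, coe_nnnorm, mul_comm]
      have hvar_le : eVariationOn γ (Icc (0:ℝ) 1) ≤ ENNReal.ofReal ‖z - y‖ := by
        have h1 := hlipγ.comp_eVariationOn_le (g := (id : ℝ → ℝ)) (s := Icc (0:ℝ) 1) (Set.mapsTo_univ _ _)
        have h2 : eVariationOn (id : ℝ → ℝ) (Icc (0:ℝ) 1) ≤ ENNReal.ofReal 1 := by
          have := (monotoneOn_id (s := Icc (0:ℝ) 1)).eVariationOn_le
            (left_mem_Icc.mpr zero_le_one) (right_mem_Icc.mpr zero_le_one)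
          simpa using this
        calc eVariationOn γ (Icc (0:ℝ) 1) = eVariationOn (γ ∘ id) (Icc (0:ℝ) 1) := rfl
          _ ≤ (‖z - y‖₊ : ENNReal) * eVariationOn (id : ℝ → ℝ) (Icc (0:ℝ) 1) := h1
          _ ≤ (‖z - y‖₊ : ENNReal) * ENNReal.ofReal 1 := by gcongr
          _ = ENNReal.ofReal ‖z - y‖ := by
              rw [ENNReal.ofReal_one, mul_one, ofReal_norm, enorm_eq_nnnorm]
      have hvar_lt : eVariationOn γ (Icc (0:ℝ) 1) < ⊤ :=
        lt_of_le_of_lt hvar_le ENNReal.ofReal_lt_top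
      have := hpath y (hball hy) z (hball hz) γ hγc hγmem hγ0 hγ1 hvar_lt
      show ‖F z - F y‖ ≤ C * ‖z - y‖
      calc ‖F z - F y‖ ≤ C * (eVariationOn γ (Icc 0 1)).toReal := this
        _ ≤ C * ‖z - y‖ := by
            apply mul_le_mul_of_nonneg_left _ hC
            exact ENNReal.toReal_le_of_le_ofReal (norm_nonneg _) hvar_le
    have := norm_fderiv_le_of_lipschitzOn ℝ (Metric.ball_mem_nhds x hε) hlip
    exact this
end

section
/- For all real numbers α, β with 0 ≤ α ≤ 3 and 0 ≤ β ≤ 3, at least one of the following two Fritsch–Carlson monotonicity conditions holds: (α − 1)² + (α − 1)(β − 1) + (β − 1)² − 3(α + β − 2) ≤ 0, or α + β ≤ 3. (Hence the square 0 ≤ α, β ≤ 4ℵ with monotonicity parameter 0 ≤ ℵ ≤ 3/4 is contained in the Fritsch–Carlson region of monotonicity, so the condition 0 ≤ α, β ≤ 4ℵ, ℵ ≤ 3/4 is sufficient for monotonicity of the cubic Hermite segment.) -/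
/-- The square `0 ≤ α, β ≤ 3` (i.e. `0 ≤ α, β ≤ 4ℵ` with `ℵ ≤ 3/4`) is contained in the
Fritsch–Carlson region of monotonicity: at least one of the two monotonicity conditions
holds for every point of the square. -/
theorem stmt_4 (α β : ℝ) (hα0 : 0 ≤ α) (hα3 : α ≤ 3) (hβ0 : 0 ≤ β) (hβ3 : β ≤ 3) :
    (α - 1)^2 + (α - 1)*(β - 1) + (β - 1)^2 - 3*(α + β - 2) ≤ 0 ∨ α + β ≤ 3 := by
  by_cases h : α + β ≤ 3
  · exact Or.inr h
  · left
    nlinarith [sq_nonneg (α - β), sq_nonneg (α + β - 3), mul_nonneg (sub_nonneg.2 hα3) (sub_nonneg.2 hβ3)]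
end

section
/- Let f : ℝ → ℝ be four times continuously differentiable (ContDiff ℝ 4) and let m ∈ ℝ. Then the midpoint interpolation error h ↦ f(m) − [ (1/2)(f(m − h/2) + f(m + h/2)) − (h/8)·(f′(m + h/2) − f′(m − h/2)) ] is O(h⁴) as h → 0, where f′ denotes the derivative of f. -/
open Asymptotics

lemma bigO_of_deriv_aux {g g' : ℝ → ℝ} (hg : ∀ x, HasDerivAt g (g' x) x) (h0 : g 0 = 0)
    {n : ℕ} (hO : g' =O[nhds 0] fun h : ℝ => h ^ n) :
    g =O[nhds 0] fun h : ℝ => h ^ (n + 1) := by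
  obtain ⟨C, hC0, hC⟩ := hO.exists_nonneg
  rw [IsBigOWith, Metric.eventually_nhds_iff] at hC
  obtain ⟨ε, hε, hb⟩ := hC
  rw [Asymptotics.isBigO_iff]
  refine ⟨C, Metric.eventually_nhds_iff.mpr ⟨ε, hε, fun h hh => ?_⟩⟩
  have habs : |h| < ε := by simpa [Real.dist_eq] using hh
  have key : ∀ t ∈ Set.uIcc (0:ℝ) h, ‖g' t‖ ≤ C * ‖h‖ ^ n := by
    intro t ht
    have hth : |t| ≤ |h| := by
      rcases Set.mem_uIcc.mp ht with ⟨h1, h2⟩ | ⟨h1, h2⟩ <;>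
        rcases abs_cases h with ⟨e1, e2⟩ | ⟨e1, e2⟩ <;>
        rcases abs_cases t with ⟨e3, e4⟩ | ⟨e3, e4⟩ <;> linarith
    have hd : dist t 0 < ε := by simpa [Real.dist_eq] using lt_of_le_of_lt hth habs
    calc ‖g' t‖ ≤ C * ‖t ^ n‖ := hb hd
      _ = C * |t| ^ n := by rw [norm_pow]; rfl
      _ ≤ C * |h| ^ n := by
          exact mul_le_mul_of_nonneg_left (pow_le_pow_left₀ (abs_nonneg t) hth n) hC0
      _ = C * ‖h‖ ^ n := rfl
  have := Convex.norm_image_sub_le_of_norm_hasDerivWithin_le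
    (fun t ht => (hg t).hasDerivWithinAt) key (convex_uIcc 0 h)
    (Set.left_mem_uIcc) (Set.right_mem_uIcc)
  calc ‖g h‖ = ‖g h - g 0‖ := by rw [h0, sub_zero]
    _ ≤ (C * ‖h‖ ^ n) * ‖h - 0‖ := this
    _ = C * ‖h ^ (n+1)‖ := by rw [sub_zero, norm_pow, pow_succ]; ring

/-- For a `C⁴` function `f`, the midpoint interpolation error
`f(m) − [ (f(m−h/2)+f(m+h/2))/2 − (h/8)(f′(m+h/2) − f′(m−h/2)) ]` is `O(h⁴)` as `h → 0`. -/
theorem stmt_5 (f : ℝ → ℝ) (hf : ContDiff ℝ 4 f) (m : ℝ) :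
    (fun h : ℝ =>
        f m - ((1/2) * (f (m - h/2) + f (m + h/2))
          - (h/8) * (deriv f (m + h/2) - deriv f (m - h/2))))
      =O[nhds 0] (fun h : ℝ => h^4) := by
  have hc1 : ContDiff ℝ 3 (deriv f) := by
    have : ContDiff ℝ ((3:ℕ)+1) f := by exact_mod_cast hf
    exact_mod_cast (contDiff_succ_iff_deriv.mp this).2.2
  have hc2 : ContDiff ℝ 2 (deriv (deriv f)) := by
    have : ContDiff ℝ ((2:ℕ)+1) (deriv f) := by exact_mod_cast hc1
    exact_mod_cast (contDiff_succ_iff_deriv.mp this).2.2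
  have hc3 : ContDiff ℝ 1 (deriv (deriv (deriv f))) := by
    have : ContDiff ℝ ((1:ℕ)+1) (deriv (deriv f)) := by exact_mod_cast hc2
    exact_mod_cast (contDiff_succ_iff_deriv.mp this).2.2
  have d0 : Differentiable ℝ f := hf.differentiable (by norm_num)
  have d1 : Differentiable ℝ (deriv f) := hc1.differentiable (by norm_num)
  have d2 : Differentiable ℝ (deriv (deriv f)) := hc2.differentiable (by norm_num)
  have d3 : Differentiable ℝ (deriv (deriv (deriv f))) := hc3.differentiable (by norm_num)
  have keyp : ∀ (g : ℝ → ℝ), Differentiable ℝ g → ∀ x : ℝ,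
      HasDerivAt (fun h : ℝ => g (m + h/2)) (deriv g (m + x/2) * (1/2)) x := by
    intro g hg x
    exact HasDerivAt.comp x (hg (m + x/2)).hasDerivAt
      (((hasDerivAt_id x).div_const 2).const_add m)
  have keym : ∀ (g : ℝ → ℝ), Differentiable ℝ g → ∀ x : ℝ,
      HasDerivAt (fun h : ℝ => g (m - h/2)) (deriv g (m - x/2) * (-(1/2))) x := by
    intro g hg x
    exact HasDerivAt.comp x (hg (m - x/2)).hasDerivAt
      (((hasDerivAt_id x).div_const 2).const_sub m)
  have hE1 : ∀ x : ℝ, HasDerivAt (fun h : ℝ =>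
      f m - ((1/2) * (f (m - h/2) + f (m + h/2))
        - (h/8) * (deriv f (m + h/2) - deriv f (m - h/2))))
      (-(1/8) * (deriv f (m + x/2) - deriv f (m - x/2))
        + (x/16) * (deriv (deriv f) (m + x/2) + deriv (deriv f) (m - x/2))) x := by
    intro x
    have h1 := keyp f d0 x
    have h2 := keym f d0 x
    have h3 := keyp (deriv f) d1 x
    have h4 := keym (deriv f) d1 x
    have := HasDerivAt.const_sub (f m)
      ((((h2.add h1).const_mul (1/2)).sub
        (((hasDerivAt_id x).div_const 8).mul (h3.sub h4))))
    convert this using 1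
    rfl
    rfl
    rfl
    simp only [Pi.sub_apply, id_eq]
    ring
  have hE2 : ∀ x : ℝ, HasDerivAt (fun h : ℝ =>
      -(1/8) * (deriv f (m + h/2) - deriv f (m - h/2))
        + (h/16) * (deriv (deriv f) (m + h/2) + deriv (deriv f) (m - h/2)))
      ((x/32) * (deriv (deriv (deriv f)) (m + x/2) - deriv (deriv (deriv f)) (m - x/2))) x := by
    intro x
    have h3 := keyp (deriv f) d1 x
    have h4 := keym (deriv f) d1 x
    have h5 := keyp (deriv (deriv f)) d2 x
    have h6 := keym (deriv (deriv f)) d2 x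
    have := ((h3.sub h4).const_mul (-(1/8))).add
      (((hasDerivAt_id x).div_const 16).mul (h5.add h6))
    convert this using 1
    rfl
    rfl
    rfl
    simp only [Pi.sub_apply, Pi.add_apply, id_eq]
    ring
  have hg : (fun h : ℝ => deriv (deriv (deriv f)) (m + h/2) - deriv (deriv (deriv f)) (m - h/2))
      =O[nhds 0] (fun h : ℝ => h) := by
    have hd : DifferentiableAt ℝ
        (fun h : ℝ => deriv (deriv (deriv f)) (m + h/2) - deriv (deriv (deriv f)) (m - h/2)) 0 :=
      ((keyp _ d3 0).sub (keym _ d3 0)).differentiableAt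
    have := hd.isBigO_sub
    simpa using this
  have hE2O : (fun x : ℝ => (x/32) * (deriv (deriv (deriv f)) (m + x/2)
      - deriv (deriv (deriv f)) (m - x/2))) =O[nhds 0] (fun h : ℝ => h ^ 2) := by
    have h1 : (fun h : ℝ => h/32) =O[nhds 0] (fun h : ℝ => h) := by
      apply Asymptotics.IsBigO.of_bound (1/32)
      filter_upwards with h
      simp [abs_div]
      rw [div_le_iff₀ (by norm_num : (0:ℝ) < 32)] at *
      nlinarith [abs_nonneg h]
    have := h1.mul hg
    have heq : (fun h : ℝ => h * h) = (fun h : ℝ => h ^ 2) := by funext h; ring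
    rwa [heq] at this
  have hO1 := bigO_of_deriv_aux hE2 (by norm_num) hE2O
  have hO0 := bigO_of_deriv_aux hE1 (by norm_num; ring) hO1
  convert hO0 using 2
end

section
/- Let f : ℝ → ℝ be four times continuously differentiable (ContDiff ℝ 4), m ∈ ℝ, s ≥ 0 a real number, and let d₊, d₋ : ℝ → ℝ be approximate derivative values satisfying d₊(h) − f′(m + h/2) = O(h^s) and d₋(h) − f′(m − h/2) = O(h^s) as h → 0. Then the interpolation error h ↦ f(m) − [ (1/2)(f(m − h/2) + f(m + h/2)) − (h/8)·(d₊(h) − d₋(h)) ] is O(h^r) as h → 0 with r = min(4, s + 1). -/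
open Asymptotics

lemma integ_bigO {u u' : ℝ → ℝ} {k : ℝ} (hk : 0 ≤ k) (hu0 : u 0 = 0)
    (hd : ∀ x, HasDerivAt u (u' x) x)
    (hO : u' =O[nhds 0] fun h : ℝ => |h| ^ k) :
    u =O[nhds 0] fun h : ℝ => |h| ^ (k + 1) := by
  rw [isBigO_iff] at hO
  obtain ⟨C, hC⟩ := hO
  rw [Metric.eventually_nhds_iff] at hC
  obtain ⟨ε, hε, hball⟩ := hC
  rw [isBigO_iff]
  refine ⟨max C 0, ?_⟩
  rw [Metric.eventually_nhds_iff]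
  refine ⟨ε, hε, fun h hh => ?_⟩
  have habs : |h| < ε := by simpa [Real.dist_eq] using hh
  rcases eq_or_ne h 0 with rfl | hne
  · simp [hu0, Real.zero_rpow (by positivity : k + 1 ≠ 0)]
  have bnd : ∀ t, |t| ≤ |h| → ‖u' t‖ ≤ max C 0 * |h| ^ k := by
    intro t ht
    have h1 : ‖u' t‖ ≤ C * ‖|t| ^ k‖ := hball (by simpa [Real.dist_eq] using lt_of_le_of_lt ht habs)
    have h2 : |t| ^ k ≤ |h| ^ k := Real.rpow_le_rpow (abs_nonneg t) ht hk
    calc ‖u' t‖ ≤ C * (|t| ^ k) := by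
          simpa [abs_of_nonneg (Real.rpow_nonneg (abs_nonneg t) k)] using h1
      _ ≤ max C 0 * (|t| ^ k) := mul_le_mul_of_nonneg_right (le_max_left _ _) (by positivity)
      _ ≤ max C 0 * |h| ^ k := mul_le_mul_of_nonneg_left h2 (le_max_right _ _)
  have key : ‖u h‖ ≤ (max C 0 * |h| ^ k) * |h| := by
    rcases le_or_gt 0 h with hpos | hneg
    · have := norm_image_sub_le_of_norm_deriv_le_segment'
        (f := u) (f' := u') (a := 0) (b := h) (C := max C 0 * |h| ^ k)
        (fun x hx => (hd x).hasDerivWithinAt)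
        (fun x hx => bnd x (by rw [abs_of_nonneg hx.1, abs_of_nonneg hpos]; exact le_of_lt hx.2))
        h (Set.right_mem_Icc.2 hpos)
      simpa [hu0, abs_of_nonneg hpos] using this
    · have := norm_image_sub_le_of_norm_deriv_le_segment'
        (f := u) (f' := u') (a := h) (b := 0) (C := max C 0 * |h| ^ k)
        (fun x hx => (hd x).hasDerivWithinAt)
        (fun x hx => bnd x (by rw [abs_of_nonpos hx.2.le, abs_of_neg hneg]; linarith [hx.1]))
        0 (Set.right_mem_Icc.2 hneg.le)
      rw [hu0] at this
      rw [show ‖u h‖ = ‖(0:ℝ) - u h‖ by simp]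
      calc ‖(0:ℝ) - u h‖ ≤ (max C 0 * |h| ^ k) * (0 - h) := this
        _ = (max C 0 * |h| ^ k) * |h| := by rw [abs_of_neg hneg]; ring
  calc ‖u h‖ ≤ (max C 0 * |h| ^ k) * |h| := key
    _ = max C 0 * ‖|h| ^ (k+1)‖ := by
        rw [Real.rpow_add_one (abs_ne_zero.2 hne),
          Real.norm_of_nonneg (by positivity)]
        ring

lemma rpow_compare {a b : ℝ} (hb : 0 < b) (hab : b ≤ a) :
    (fun h : ℝ => |h| ^ a) =O[nhds 0] fun h : ℝ => |h| ^ b := by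
  rw [isBigO_iff]
  refine ⟨1, ?_⟩
  rw [Metric.eventually_nhds_iff]
  refine ⟨1, one_pos, fun h hh => ?_⟩
  have habs : |h| < 1 := by simpa [Real.dist_eq] using hh
  rcases eq_or_ne h 0 with rfl | hne
  · simp [Real.zero_rpow hb.ne', Real.zero_rpow (by linarith : a ≠ 0)]
  · have hpos : 0 < |h| := abs_pos.2 hne
    rw [Real.norm_of_nonneg (by positivity), Real.norm_of_nonneg (by positivity), one_mul]
    exact Real.rpow_le_rpow_of_exponent_ge hpos habs.le hab

lemma shift_bigO (u : ℝ → ℝ) (hu : Differentiable ℝ u) (m c : ℝ) :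
    (fun h : ℝ => u (m + c * h) - u m) =O[nhds 0] fun h : ℝ => |h| := by
  have h1 : (fun x : ℝ => u x - u m) =O[nhds m] fun x => x - m :=
    (hu m).hasDerivAt.hasFDerivAt.isBigO_sub
  have h2 : Filter.Tendsto (fun h : ℝ => m + c * h) (nhds 0) (nhds m) := by
    have : Continuous (fun h : ℝ => m + c * h) := by continuity
    simpa using this.tendsto 0
  have h3 := h1.comp_tendsto h2
  simp only [Function.comp_def, add_sub_cancel_left] at h3
  calc (fun h : ℝ => u (m + c * h) - u m) =O[nhds 0] (fun h : ℝ => c * h) := h3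
    _ =O[nhds 0] fun h : ℝ => |h| :=
      (isBigO_refl (fun h : ℝ => h) (nhds 0)).abs_right.const_mul_left c

lemma lin_bigO (c : ℝ) : (fun h : ℝ => h / c) =O[nhds 0] fun h : ℝ => |h| := by
  have := (isBigO_refl (fun h : ℝ => h) (nhds 0)).abs_right.const_mul_left (1/c)
  exact this.congr_left (fun x => by ring)

/-- Midpoint interpolation with approximate endpoint derivatives: if the derivative values
are `O(h^s)`-accurate, the interpolation error is `O(h^r)` with `r = min(4, s+1)`. -/
theorem stmt_6 (f : ℝ → ℝ) (hf : ContDiff ℝ 4 f) (m : ℝ) (s : ℝ) (hs : 0 ≤ s)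
    (dp dm : ℝ → ℝ)
    (hdp : (fun h : ℝ => dp h - deriv f (m + h/2)) =O[nhds 0] (fun h : ℝ => |h| ^ s))
    (hdm : (fun h : ℝ => dm h - deriv f (m - h/2)) =O[nhds 0] (fun h : ℝ => |h| ^ s)) :
    (fun h : ℝ =>
        f m - ((1/2) * (f (m - h/2) + f (m + h/2)) - (h/8) * (dp h - dm h)))
      =O[nhds 0] (fun h : ℝ => |h| ^ min 4 (s + 1)) := by
  have hf4 : ContDiff ℝ (3+1) f := by norm_num at hf ⊢; exact hf
  have hfd : Differentiable ℝ f := (contDiff_succ_iff_deriv.mp hf4).1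
  have hf1 : ContDiff ℝ (2+1) (deriv f) := by
    have := (contDiff_succ_iff_deriv.mp hf4).2.2; norm_num at this ⊢; exact this
  have hf1d : Differentiable ℝ (deriv f) := (contDiff_succ_iff_deriv.mp hf1).1
  have hf2 : ContDiff ℝ (1+1) (deriv (deriv f)) := by
    have := (contDiff_succ_iff_deriv.mp hf1).2.2; norm_num at this ⊢; exact this
  have hf2d : Differentiable ℝ (deriv (deriv f)) := (contDiff_succ_iff_deriv.mp hf2).1
  have hf3d : Differentiable ℝ (deriv (deriv (deriv f))) :=
    ((contDiff_succ_iff_deriv.mp hf2).2.2).differentiable one_ne_zero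
  set f1 := deriv f with hf1def
  set f2 := deriv f1 with hf2def
  set f3 := deriv f2 with hf3def
  have innerP : ∀ h : ℝ, HasDerivAt (fun h : ℝ => m + h/2) (1/2) h := fun h =>
    ((hasDerivAt_id h).div_const 2).const_add m
  have innerM : ∀ h : ℝ, HasDerivAt (fun h : ℝ => m - h/2) (-(1/2)) h := by
    intro h
    simpa using ((hasDerivAt_id h).div_const 2).const_sub m
  have compP : ∀ (u : ℝ → ℝ), Differentiable ℝ u → ∀ h : ℝ,
      HasDerivAt (fun h : ℝ => u (m + h/2)) (deriv u (m + h/2) * (1/2)) h := by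
    intro u hu h
    exact ((hu (m + h/2)).hasDerivAt).comp h (innerP h)
  have compM : ∀ (u : ℝ → ℝ), Differentiable ℝ u → ∀ h : ℝ,
      HasDerivAt (fun h : ℝ => u (m - h/2)) (deriv u (m - h/2) * (-(1/2))) h := by
    intro u hu h
    exact ((hu (m - h/2)).hasDerivAt).comp h (innerM h)
  set g : ℝ → ℝ := fun h => f m - ((1/2) * (f (m - h/2) + f (m + h/2)) - (h/8) * (f1 (m + h/2) - f1 (m - h/2))) with hgdef
  set g1 : ℝ → ℝ := fun h => -(1/8) * (f1 (m + h/2) - f1 (m - h/2)) + (h/16) * (f2 (m + h/2) + f2 (m - h/2)) with hg1def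
  set g2 : ℝ → ℝ := fun h => (h/32) * (f3 (m + h/2) - f3 (m - h/2)) with hg2def
  have hdg : ∀ h, HasDerivAt g (g1 h) h := by
    intro h
    have A := compM f hfd h
    have B := compP f hfd h
    have C := compP f1 hf1d h
    have D := compM f1 hf1d h
    have HC : HasDerivAt (fun h : ℝ => (h/8) * (f1 (m + h/2) - f1 (m - h/2)))
        ((1/8) * (f1 (m + h/2) - f1 (m - h/2)) + (h/8) * (f2 (m + h/2) * (1/2) - f2 (m - h/2) * (-(1/2)))) h := by
      have := ((hasDerivAt_id h).div_const 8).fun_mul (C.fun_sub D)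
      convert this using 1
      all_goals try rfl
      all_goals simp only [id_eq]; ring
    have := (((A.fun_add B).const_mul (1/2)).fun_sub HC).const_sub (f m)
    convert this using 1
    all_goals try rfl
    all_goals simp only [hg1def, id_eq]; ring
  have hdg1 : ∀ h, HasDerivAt g1 (g2 h) h := by
    intro h
    have C := compP f1 hf1d h
    have D := compM f1 hf1d h
    have E := compP f2 hf2d h
    have F := compM f2 hf2d h
    have := ((C.fun_sub D).const_mul (-(1/8))).fun_add
      (((hasDerivAt_id h).div_const 16).fun_mul (E.fun_add F))
    convert this using 1
    all_goals try rfl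
    all_goals simp only [hg2def, id_eq]; ring
  -- g2 = O(|h|^2)
  have hg2O : g2 =O[nhds 0] fun h : ℝ => |h| ^ (2:ℝ) := by
    have hA := shift_bigO f3 hf3d m (1/2)
    have hB := shift_bigO f3 hf3d m (-(1/2))
    have hdiff : (fun h : ℝ => f3 (m + h/2) - f3 (m - h/2)) =O[nhds 0] fun h : ℝ => |h| := by
      have := hA.sub hB
      refine (this.congr_left (fun h => ?_)).congr_right (fun h => rfl)
      have e1 : m + (1/2) * h = m + h/2 := by ring
      have e2 : m + (-(1/2)) * h = m - h/2 := by ring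
      rw [e1, e2]; ring
    have := (lin_bigO 32).mul hdiff
    refine this.congr_right (fun h => ?_)
    rcases eq_or_ne h 0 with rfl | hne
    · simp [Real.zero_rpow (by norm_num : (2:ℝ) ≠ 0)]
    · rw [show (2:ℝ) = 1 + 1 by norm_num, Real.rpow_add_one (abs_ne_zero.2 hne),
        Real.rpow_one]
  have hg1O : g1 =O[nhds 0] fun h : ℝ => |h| ^ ((2:ℝ) + 1) := by
    refine integ_bigO (by norm_num) ?_ hdg1 hg2O
    simp [hg1def]
  have hgO : g =O[nhds 0] fun h : ℝ => |h| ^ (((2:ℝ) + 1) + 1) := by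
    refine integ_bigO (by norm_num) ?_ hdg hg1O
    simp only [hgdef]
    ring_nf
  have hmin_pos : (0:ℝ) < min 4 (s + 1) := lt_min (by norm_num) (by linarith)
  have hgO' : g =O[nhds 0] fun h : ℝ => |h| ^ min 4 (s + 1) := by
    refine hgO.trans ?_
    have : ((2:ℝ) + 1) + 1 = 4 := by norm_num
    rw [this]
    exact rpow_compare hmin_pos (min_le_left _ _)
  have heO : (fun h : ℝ => (h/8) * ((dp h - f1 (m + h/2)) - (dm h - f1 (m - h/2))))
      =O[nhds 0] fun h : ℝ => |h| ^ min 4 (s + 1) := by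
    have := (lin_bigO 8).mul (hdp.sub hdm)
    refine (this.trans ?_)
    have heq : (fun h : ℝ => |h| * |h| ^ s) =O[nhds 0] fun h : ℝ => |h| ^ (s + 1) := by
      refine (isBigO_refl (fun h : ℝ => |h| ^ (s+1)) (nhds 0)).congr_left (fun h => ?_)
      rcases eq_or_ne h 0 with rfl | hne
      · simp [Real.zero_rpow (by positivity : s + 1 ≠ 0)]
      · rw [Real.rpow_add_one (abs_ne_zero.2 hne)]; ring
    exact heq.trans (rpow_compare hmin_pos (min_le_right _ _))
  have := hgO'.add heO
  refine this.congr_left (fun h => ?_)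
  simp only [hgdef]
  ring
end
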